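/- arXiv:1103.3930 — 2 statements merged into one kernel-verified Lean document; each statement's English description precedes it below -/
import Mathlib

section
/- Let b₀, b₁, b₂, b₃ be integers and set a₀ = b₀, a₁ = b₁ − 2b₀, a₂ = b₂ − 2b₁ + 3b₀, a₃ = b₃ − 2b₂ + 3b₁ − 4b₀. With c^{(3)}_t = (1 − t)^{−b₃} (1 − 2t)^{b₂} (1 − 3t)^{−b₁} (1 − 4t)^{b₀} in ℚ⟦t⟧ and c_i^{(3)} its t^i-coefficient, one has 6·c₃^{(3)} = a₃³ + 6(a₁a₃ − a₀a₃ − a₂a₃) + 3a₃² − 36a₀ + 24a₁ − 12a₂ + 2a₃. -/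
/-!
Statement 12. For integers `b₀, b₁, b₂, b₃`, with `a₀ = b₀`, `a₁ = b₁ − 2b₀`,
`a₂ = b₂ − 2b₁ + 3b₀`, `a₃ = b₃ − 2b₂ + 3b₁ − 4b₀`, and `c₃` the `t³`-coefficient of
`c^{(3)}_t = (1 − t)^{−b₃} (1 − 2t)^{b₂} (1 − 3t)^{−b₁} (1 − 4t)^{b₀} ∈ ℚ⟦t⟧`, one has
`6 c₃ = a₃³ + 6(a₁a₃ − a₀a₃ − a₂a₃) + 3a₃² − 36a₀ + 24a₁ − 12a₂ + 2a₃`.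
-/


open PowerSeries

lemma mul0 (f g : PowerSeries ℚ) : coeff 0 (f*g) = coeff 0 f * coeff 0 g := by
  simp [coeff_mul]

lemma mul1 (f g : PowerSeries ℚ) :
    coeff 1 (f*g) = coeff 0 f * coeff 1 g + coeff 1 f * coeff 0 g := by
  rw [coeff_mul, Finset.Nat.sum_antidiagonal_eq_sum_range_succ_mk]
  simp [Finset.sum_range_succ]

lemma mul2 (f g : PowerSeries ℚ) :
    coeff 2 (f*g) = coeff 0 f * coeff 2 g + coeff 1 f * coeff 1 g
      + coeff 2 f * coeff 0 g := by
  rw [coeff_mul, Finset.Nat.sum_antidiagonal_eq_sum_range_succ_mk]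
  simp [Finset.sum_range_succ]

lemma mul3 (f g : PowerSeries ℚ) :
    coeff 3 (f*g) = coeff 0 f * coeff 3 g + coeff 1 f * coeff 2 g
      + coeff 2 f * coeff 1 g + coeff 3 f * coeff 0 g := by
  rw [coeff_mul, Finset.Nat.sum_antidiagonal_eq_sum_range_succ_mk]
  simp [Finset.sum_range_succ]

lemma zpow_coeffs (k : ℚ) (v : (PowerSeries ℚ)ˣ)
    (hv : (v : PowerSeries ℚ) = 1 - PowerSeries.C k * PowerSeries.X) (n : ℤ) :
    coeff 0 ((v ^ n : (PowerSeries ℚ)ˣ) : PowerSeries ℚ) = 1 ∧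
    coeff 1 ((v ^ n : (PowerSeries ℚ)ˣ) : PowerSeries ℚ) = -(n : ℚ) * k ∧
    coeff 2 ((v ^ n : (PowerSeries ℚ)ˣ) : PowerSeries ℚ) = (n : ℚ) * (n - 1) / 2 * k ^ 2 ∧
    coeff 3 ((v ^ n : (PowerSeries ℚ)ˣ) : PowerSeries ℚ)
      = -((n : ℚ) * (n - 1) * (n - 2)) / 6 * k ^ 3 := by
  have hv0 : coeff 0 ((v : PowerSeries ℚ)) = 1 := by simp [hv]
  have hv1 : coeff 1 ((v : PowerSeries ℚ)) = -k := by simp [hv]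
  have hv2 : coeff 2 ((v : PowerSeries ℚ)) = 0 := by
    simp [hv, coeff_X, coeff_one]
  have hv3 : coeff 3 ((v : PowerSeries ℚ)) = 0 := by
    simp [hv, coeff_X, coeff_one]
  induction n using Int.induction_on with
  | zero => simp [coeff_one]
  | succ m ih =>
    obtain ⟨i0, i1, i2, i3⟩ := ih
    have he : ((v ^ ((m : ℤ) + 1) : (PowerSeries ℚ)ˣ) : PowerSeries ℚ)
        = ((v ^ (m : ℤ) : (PowerSeries ℚ)ˣ) : PowerSeries ℚ) * (v : PowerSeries ℚ) := by
      rw [← Units.val_mul, ← zpow_add_one]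
    refine ⟨?_, ?_, ?_, ?_⟩ <;>
      rw [he] <;>
      simp only [mul0, mul1, mul2, mul3, i0, i1, i2, i3, hv0, hv1, hv2, hv3] <;>
      push_cast <;> ring
  | pred m ih =>
    obtain ⟨i0, i1, i2, i3⟩ := ih
    have he : ((v ^ (-(m : ℤ)) : (PowerSeries ℚ)ˣ) : PowerSeries ℚ)
        = ((v ^ (-(m : ℤ) - 1) : (PowerSeries ℚ)ˣ) : PowerSeries ℚ) * (v : PowerSeries ℚ) := by
      rw [← Units.val_mul, ← zpow_add_one]
      ring_nf
    set f := ((v ^ (-(m : ℤ) - 1) : (PowerSeries ℚ)ˣ) : PowerSeries ℚ) with hf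
    rw [he, mul0, hv0] at i0
    rw [he, mul1, hv0, hv1] at i1
    rw [he, mul2, hv0, hv1, hv2] at i2
    rw [he, mul3, hv0, hv1, hv2, hv3] at i3
    push_cast at i0 i1 i2 i3 ⊢
    have c0 : coeff 0 f = 1 := by linarith
    have c1 : coeff 1 f = -(-(m : ℚ) - 1) * k := by linear_combination i1 + k * c0
    have c2 : coeff 2 f = (-(m : ℚ) - 1) * ((-(m : ℚ) - 1) - 1) / 2 * k ^ 2 := by
      linear_combination i2 + k * c1
    have c3 : coeff 3 f
        = -((-(m : ℚ) - 1) * ((-(m : ℚ) - 1) - 1) * ((-(m : ℚ) - 1) - 2)) / 6 * k ^ 3 := by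
      linear_combination i3 + k * c2
    refine ⟨c0, by linear_combination c1, by linear_combination c2, by linear_combination c3⟩


theorem stmt12 (b0 b1 b2 b3 a0 a1 a2 a3 : ℤ)
    (ha0 : a0 = b0) (ha1 : a1 = b1 - 2 * b0) (ha2 : a2 = b2 - 2 * b1 + 3 * b0)
    (ha3 : a3 = b3 - 2 * b2 + 3 * b1 - 4 * b0)
    (u : ℕ → (PowerSeries ℚ)ˣ)
    (hu : ∀ k, (u k : PowerSeries ℚ) = 1 - PowerSeries.C (k : ℚ) * PowerSeries.X)
    (c : PowerSeries ℚ)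
    (hc : c = ((u 1 ^ (-b3) * u 2 ^ b2 * u 3 ^ (-b1) * u 4 ^ b0 :
      (PowerSeries ℚ)ˣ) : PowerSeries ℚ)) :
    6 * (PowerSeries.coeff 3) c =
      ((a3 ^ 3 + 6 * (a1 * a3 - a0 * a3 - a2 * a3) + 3 * a3 ^ 2
          - 36 * a0 + 24 * a1 - 12 * a2 + 2 * a3 : ℤ) : ℚ) := by
 
  subst hc
  obtain ⟨p0, p1, p2, p3⟩ := zpow_coeffs 1 (u 1) (by simpa using hu 1) (-b3)
  obtain ⟨q0, q1, q2, q3⟩ := zpow_coeffs 2 (u 2) (by simpa using hu 2) b2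
  obtain ⟨r0, r1, r2, r3⟩ := zpow_coeffs 3 (u 3) (by simpa using hu 3) (-b1)
  obtain ⟨s0, s1, s2, s3⟩ := zpow_coeffs 4 (u 4) (by simpa using hu 4) b0
  simp only [Units.val_mul]
  simp only [mul0, mul1, mul2, mul3, p0, p1, p2, p3, q0, q1, q2, q3,
    r0, r1, r2, r3, s0, s1, s2, s3]
  simp only [ha0, ha1, ha2, ha3]
  push_cast
  ring
end

section
/- For every integer j ≥ 1, the coefficient of t² in the formal power series ∏_{k=1}^{j+1} (1 − kt)^{(−1)^k \binom{j+2}{j+1−k}} ∈ ℚ⟦t⟧ (negative exponents denoting inverses of the units (1 − kt)) is equal to zero. -/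
open Finset PowerSeries


lemma altA (n : ℕ) (hn : 1 ≤ n) :
    ∑ i ∈ range (n+1), (-1:ℤ)^i * (n.choose i) = 0 := by
  rw [Int.alternating_sum_range_choose]; simp [Nat.one_le_iff_ne_zero.mp hn]

lemma altB (n : ℕ) (hn : 2 ≤ n) :
    ∑ i ∈ range (n+1), (-1:ℤ)^i * (n.choose i) * i = 0 := by
  obtain ⟨m, rfl⟩ : ∃ m, n = m + 2 := ⟨n - 2, by omega⟩
  rw [Finset.sum_range_succ']
  have hsum : ∑ i ∈ range (m+2), (-1:ℤ)^(i+1) * ((m+2).choose (i+1)) * ((i+1 : ℕ):ℤ) = 0 := by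
    calc ∑ i ∈ range (m+2), (-1:ℤ)^(i+1) * ((m+2).choose (i+1)) * ((i+1 : ℕ):ℤ)
        = ∑ i ∈ range (m+2), ((m:ℤ)+2) * -((-1:ℤ)^i * ((m+1).choose i)) := by
          refine Finset.sum_congr rfl fun i _ => ?_
          have h2 : ((m:ℤ)+2) * ((m+1).choose i : ℤ) = ((m+2).choose (i+1) : ℤ) * ((i:ℤ)+1) := by
            exact_mod_cast congrArg (Nat.cast : ℕ → ℤ) (Nat.add_one_mul_choose_eq (m+1) i)
          rw [pow_succ]
          push_cast
          linear_combination ((-1:ℤ)^i) * h2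
      _ = ((m:ℤ)+2) * -(∑ i ∈ range (m+2), (-1:ℤ)^i * ((m+1).choose i)) := by
          rw [← Finset.mul_sum, ← Finset.sum_neg_distrib]
      _ = 0 := by rw [altA (m+1) (by omega)]; ring
  rw [hsum]; simp

lemma altD (n : ℕ) (hn : 3 ≤ n) :
    ∑ i ∈ range (n+1), (-1:ℤ)^i * (n.choose i) * (i:ℤ)^2 = 0 := by
  obtain ⟨m, rfl⟩ : ∃ m, n = m + 3 := ⟨n - 3, by omega⟩
  rw [Finset.sum_range_succ']
  have hsum : ∑ i ∈ range (m+3), (-1:ℤ)^(i+1) * ((m+3).choose (i+1)) * ((i+1 : ℕ):ℤ)^2 = 0 := by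
    calc ∑ i ∈ range (m+3), (-1:ℤ)^(i+1) * ((m+3).choose (i+1)) * ((i+1 : ℕ):ℤ)^2
        = ∑ i ∈ range (m+3), ((m:ℤ)+3) * -((-1:ℤ)^i * ((m+2).choose i) * i
            + (-1:ℤ)^i * ((m+2).choose i)) := by
          refine Finset.sum_congr rfl fun i _ => ?_
          have h2 : ((m:ℤ)+3) * ((m+2).choose i : ℤ) = ((m+3).choose (i+1) : ℤ) * ((i:ℤ)+1) := by
            exact_mod_cast congrArg (Nat.cast : ℕ → ℤ) (Nat.add_one_mul_choose_eq (m+2) i)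
          rw [pow_succ]
          push_cast
          linear_combination ((-1:ℤ)^i * ((i:ℤ)+1)) * h2
      _ = ((m:ℤ)+3) * -((∑ i ∈ range (m+3), (-1:ℤ)^i * ((m+2).choose i) * i)
            + ∑ i ∈ range (m+3), (-1:ℤ)^i * ((m+2).choose i)) := by
          rw [← Finset.sum_add_distrib, ← Finset.sum_neg_distrib, ← Finset.mul_sum]
      _ = 0 := by rw [altA (m+2) (by omega), altB (m+2) (by omega)]; ring
  rw [hsum]; simp

lemma Pfull (j m : ℕ) (hm : m ≤ 2) (hj : 1 ≤ j) :
    ∑ i ∈ range (j+3), (-1:ℤ)^i * ((j+2).choose i) * ((j:ℤ)+1-i)^m = 0 := by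
  have hA := altA (j+2) (by omega)
  have hB := altB (j+2) (by omega)
  have hD := altD (j+2) (by omega)
  interval_cases m
  · calc ∑ i ∈ range (j+3), (-1:ℤ)^i * ((j+2).choose i) * ((j:ℤ)+1-i)^0
        = ∑ i ∈ range (j+3), (-1:ℤ)^i * ((j+2).choose i) :=
          Finset.sum_congr rfl fun i _ => by ring
      _ = 0 := hA
  · calc ∑ i ∈ range (j+3), (-1:ℤ)^i * ((j+2).choose i) * ((j:ℤ)+1-i)^1
        = ∑ i ∈ range (j+3), (((j:ℤ)+1) * ((-1:ℤ)^i * ((j+2).choose i))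
            - (-1:ℤ)^i * ((j+2).choose i) * i) :=
          Finset.sum_congr rfl fun i _ => by ring
      _ = ((j:ℤ)+1) * (∑ i ∈ range (j+3), (-1:ℤ)^i * ((j+2).choose i))
            - ∑ i ∈ range (j+3), (-1:ℤ)^i * ((j+2).choose i) * i := by
          rw [Finset.sum_sub_distrib, Finset.mul_sum]
      _ = 0 := by rw [hA, hB]; ring
  · calc ∑ i ∈ range (j+3), (-1:ℤ)^i * ((j+2).choose i) * ((j:ℤ)+1-i)^2
        = ∑ i ∈ range (j+3), ((((j:ℤ)+1)^2) * ((-1:ℤ)^i * ((j+2).choose i))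
            - (2*((j:ℤ)+1)) * ((-1:ℤ)^i * ((j+2).choose i) * i)
            + (-1:ℤ)^i * ((j+2).choose i) * (i:ℤ)^2) :=
          Finset.sum_congr rfl fun i _ => by ring
      _ = (((j:ℤ)+1)^2) * (∑ i ∈ range (j+3), (-1:ℤ)^i * ((j+2).choose i))
            - (2*((j:ℤ)+1)) * (∑ i ∈ range (j+3), (-1:ℤ)^i * ((j+2).choose i) * i)
            + ∑ i ∈ range (j+3), (-1:ℤ)^i * ((j+2).choose i) * (i:ℤ)^2 := by
          rw [Finset.sum_add_distrib, Finset.sum_sub_distrib, Finset.mul_sum, Finset.mul_sum]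
      _ = 0 := by rw [hA, hB, hD]; ring

lemma P1 (j : ℕ) (hj : 1 ≤ j) :
    ∑ i ∈ range (j+1), (-1:ℤ)^i * ((j+2).choose i) * ((j:ℤ)+1-i)^1 = (-1:ℤ)^j := by
  have h := Pfull j 1 (by omega) hj
  rw [show j+3 = (j+1)+1+1 by ring, Finset.sum_range_succ, Finset.sum_range_succ] at h
  simp only [Nat.choose_self] at h
  push_cast at h
  linear_combination h

lemma P2 (j : ℕ) (hj : 1 ≤ j) :
    ∑ i ∈ range (j+1), (-1:ℤ)^i * ((j+2).choose i) * ((j:ℤ)+1-i)^2 = -(-1:ℤ)^j := by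
  have h := Pfull j 2 (by omega) hj
  rw [show j+3 = (j+1)+1+1 by ring, Finset.sum_range_succ, Finset.sum_range_succ] at h
  simp only [Nat.choose_self] at h
  push_cast at h
  linear_combination h

lemma S_reindex (j m : ℕ) :
    ∑ k ∈ Finset.Icc 1 (j+1), (-1:ℤ)^k * ((j+2).choose (j+1-k)) * (k:ℤ)^m
    = (-1:ℤ)^(j+1) * ∑ i ∈ range (j+1), (-1:ℤ)^i * ((j+2).choose i) * ((j:ℤ)+1-i)^m := by
  rw [Finset.mul_sum]
  refine Finset.sum_nbij' (fun k => j+1-k) (fun i => j+1-i) ?_ ?_ ?_ ?_ ?_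
  · intro k hk; simp only [Finset.mem_Icc, Finset.mem_range] at hk ⊢; omega
  · intro i hi; simp only [Finset.mem_Icc, Finset.mem_range] at hi ⊢; omega
  · intro k hk; simp only [Finset.mem_Icc] at hk; omega
  · intro i hi; simp only [Finset.mem_range] at hi; omega
  · intro k hk
    simp only [Finset.mem_Icc] at hk
    have h1 : j+1-(j+1-k) = k := by omega
    have h2 : ((j:ℤ)+1) - ((j+1-k : ℕ) : ℤ) = (k:ℤ) := by
      have : ((j+1-k : ℕ) : ℤ) = (j:ℤ)+1-(k:ℤ) := by
        rw [Nat.cast_sub hk.2]; push_cast; ring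
      rw [this]; ring
    rw [h2]
    have hs : (-1:ℤ)^(j+1) * (-1:ℤ)^(j+1-k) = (-1:ℤ)^k := by
      rw [← pow_add, show (j+1)+(j+1-k) = 2*(j+1-k)+k by omega, pow_add, pow_mul]
      simp
    linear_combination (-((j+2).choose (j+1-k) : ℤ) * (k:ℤ)^m) * hs


lemma coeff_mul012 (f g : PowerSeries ℚ) :
    coeff 0 (f*g) = coeff 0 f * coeff 0 g ∧
    coeff 1 (f*g) = coeff 0 f * coeff 1 g + coeff 1 f * coeff 0 g ∧
    coeff 2 (f*g) = coeff 0 f * coeff 2 g + coeff 1 f * coeff 1 g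
      + coeff 2 f * coeff 0 g := by
  refine ⟨?_, ?_, ?_⟩ <;>
  · rw [PowerSeries.coeff_mul, Finset.Nat.sum_antidiagonal_eq_sum_range_succ_mk]
    simp [Finset.sum_range_succ]

lemma coeff_u (u : (PowerSeries ℚ)ˣ) (c : ℚ)
    (hu : (u : PowerSeries ℚ) = 1 - PowerSeries.C c * PowerSeries.X) :
    coeff 0 (u : PowerSeries ℚ) = 1 ∧ coeff 1 (u : PowerSeries ℚ) = -c ∧
      coeff 2 (u : PowerSeries ℚ) = 0 := by
  rw [hu]; refine ⟨?_, ?_, ?_⟩ <;> simp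

lemma coeff_uinv (u : (PowerSeries ℚ)ˣ) (c : ℚ)
    (hu : (u : PowerSeries ℚ) = 1 - PowerSeries.C c * PowerSeries.X) :
    coeff 0 ((u⁻¹ : (PowerSeries ℚ)ˣ) : PowerSeries ℚ) = 1 ∧
    coeff 1 ((u⁻¹ : (PowerSeries ℚ)ˣ) : PowerSeries ℚ) = c ∧
    coeff 2 ((u⁻¹ : (PowerSeries ℚ)ˣ) : PowerSeries ℚ) = c^2 := by
  obtain ⟨b0, b1, b2⟩ := coeff_u u c hu
  have h : (u : PowerSeries ℚ) * ((u⁻¹ : (PowerSeries ℚ)ˣ) : PowerSeries ℚ) = 1 := by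
    rw [← Units.val_mul, mul_inv_cancel, Units.val_one]
  obtain ⟨m0, m1, m2⟩ := coeff_mul012 (u : PowerSeries ℚ) ((u⁻¹ : (PowerSeries ℚ)ˣ) : PowerSeries ℚ)
  rw [h] at m0 m1 m2
  simp only [b0, b1, b2] at m0 m1 m2
  have c0 : coeff 0 (1 : PowerSeries ℚ) = 1 := by simp
  have c1 : coeff 1 (1 : PowerSeries ℚ) = 0 := by simp
  have c2 : coeff 2 (1 : PowerSeries ℚ) = 0 := by simp
  rw [c0, one_mul] at m0
  rw [c1, one_mul] at m1
  rw [c2, one_mul] at m2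
  have hv0 : coeff 0 ((u⁻¹ : (PowerSeries ℚ)ˣ) : PowerSeries ℚ) = 1 := m0.symm
  rw [hv0] at m1 m2
  have hv1 : coeff 1 ((u⁻¹ : (PowerSeries ℚ)ˣ) : PowerSeries ℚ) = c := by linarith
  rw [hv1] at m2
  have hv2 : coeff 2 ((u⁻¹ : (PowerSeries ℚ)ˣ) : PowerSeries ℚ) = c ^ 2 := by
    linear_combination -m2
  exact ⟨hv0, hv1, hv2⟩

lemma coeff_zpow (u : (PowerSeries ℚ)ˣ) (c : ℚ)
    (hu : (u : PowerSeries ℚ) = 1 - PowerSeries.C c * PowerSeries.X) (e : ℤ) :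
    coeff 0 ((u^e : (PowerSeries ℚ)ˣ) : PowerSeries ℚ) = 1 ∧
    coeff 1 ((u^e : (PowerSeries ℚ)ˣ) : PowerSeries ℚ) = -((e:ℚ)*c) ∧
    coeff 2 ((u^e : (PowerSeries ℚ)ˣ) : PowerSeries ℚ) = ((e:ℚ)^2*c^2 - (e:ℚ)*c^2)/2 := by
  induction e using Int.induction_on with
  | zero => norm_num
  | succ n ih =>
    obtain ⟨a0, a1, a2⟩ := ih
    obtain ⟨b0, b1, b2⟩ := coeff_u u c hu
    have key : ((u^((n:ℤ)+1) : (PowerSeries ℚ)ˣ) : PowerSeries ℚ)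
        = ((u^(n:ℤ) : (PowerSeries ℚ)ˣ) : PowerSeries ℚ) * (u : PowerSeries ℚ) := by
      rw [← Units.val_mul, zpow_add_one]
    obtain ⟨m0, m1, m2⟩ := coeff_mul012
      ((u^(n:ℤ) : (PowerSeries ℚ)ˣ) : PowerSeries ℚ) (u : PowerSeries ℚ)
    rw [← key] at m0 m1 m2
    rw [m0, m1, m2, a0, a1, a2, b0, b1, b2]
    refine ⟨by ring, by push_cast; ring, by push_cast; ring⟩
  | pred n ih =>
    obtain ⟨a0, a1, a2⟩ := ih
    obtain ⟨b0, b1, b2⟩ := coeff_uinv u c hu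
    have key : ((u^(-(n:ℤ)-1) : (PowerSeries ℚ)ˣ) : PowerSeries ℚ)
        = ((u^(-(n:ℤ)) : (PowerSeries ℚ)ˣ) : PowerSeries ℚ)
          * ((u⁻¹ : (PowerSeries ℚ)ˣ) : PowerSeries ℚ) := by
      rw [← Units.val_mul, zpow_sub_one]
    obtain ⟨m0, m1, m2⟩ := coeff_mul012
      ((u^(-(n:ℤ)) : (PowerSeries ℚ)ˣ) : PowerSeries ℚ)
      ((u⁻¹ : (PowerSeries ℚ)ˣ) : PowerSeries ℚ)
    rw [← key] at m0 m1 m2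
    rw [m0, m1, m2, a0, a1, a2, b0, b1, b2]
    refine ⟨by ring, by push_cast; ring, by push_cast; ring⟩

lemma coeff_prod (u : ℕ → (PowerSeries ℚ)ˣ)
    (hu : ∀ k, (u k : PowerSeries ℚ) = 1 - PowerSeries.C (k:ℚ) * PowerSeries.X)
    (e : ℕ → ℤ) (s : Finset ℕ) :
    coeff 0 ((∏ k ∈ s, u k ^ e k : (PowerSeries ℚ)ˣ) : PowerSeries ℚ) = 1 ∧
    coeff 1 ((∏ k ∈ s, u k ^ e k : (PowerSeries ℚ)ˣ) : PowerSeries ℚ)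
      = -(∑ k ∈ s, (e k : ℚ) * k) ∧
    coeff 2 ((∏ k ∈ s, u k ^ e k : (PowerSeries ℚ)ˣ) : PowerSeries ℚ)
      = ((∑ k ∈ s, (e k : ℚ) * k)^2 - ∑ k ∈ s, (e k : ℚ) * (k:ℚ)^2)/2 := by
  induction s using Finset.induction_on with
  | empty => norm_num
  | @insert a s ha ih =>
    obtain ⟨a0, a1, a2⟩ := ih
    obtain ⟨b0, b1, b2⟩ := coeff_zpow (u a) (a : ℚ) (hu a) (e a)
    have key : ((∏ k ∈ insert a s, u k ^ e k : (PowerSeries ℚ)ˣ) : PowerSeries ℚ)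
        = ((u a ^ e a : (PowerSeries ℚ)ˣ) : PowerSeries ℚ)
          * ((∏ k ∈ s, u k ^ e k : (PowerSeries ℚ)ˣ) : PowerSeries ℚ) := by
      rw [← Units.val_mul, Finset.prod_insert ha]
    obtain ⟨m0, m1, m2⟩ := coeff_mul012
      ((u a ^ e a : (PowerSeries ℚ)ˣ) : PowerSeries ℚ)
      ((∏ k ∈ s, u k ^ e k : (PowerSeries ℚ)ˣ) : PowerSeries ℚ)
    rw [← key] at m0 m1 m2
    rw [m0, m1, m2, a0, a1, a2, b0, b1, b2,
      Finset.sum_insert ha, Finset.sum_insert ha]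
    refine ⟨by ring, by ring, by ring⟩


theorem stmt16 (j : ℕ) (hj : 1 ≤ j)
    (u : ℕ → (PowerSeries ℚ)ˣ)
    (hu : ∀ k, (u k : PowerSeries ℚ) = 1 - PowerSeries.C (k : ℚ) * PowerSeries.X) :
    (PowerSeries.coeff 2)
      ((↑(∏ k ∈ Finset.Icc 1 (j + 1),
          u k ^ ((-1 : ℤ) ^ k * ((j + 2).choose (j + 1 - k) : ℤ))) : PowerSeries ℚ)) = 0 := by
  obtain ⟨h0, h1, h2⟩ := coeff_prod u hu
    (fun k => (-1:ℤ)^k * ((j+2).choose (j+1-k) : ℤ)) (Finset.Icc 1 (j+1))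

  rw [h2]
  have hZ1 : ∑ k ∈ Finset.Icc 1 (j+1),
      (-1:ℤ)^k * ((j+2).choose (j+1-k)) * (k:ℤ)^1 = -1 := by
    rw [S_reindex j 1, P1 j hj, ← pow_add]
    exact Odd.neg_one_pow ⟨j, by omega⟩
  simp only [pow_one] at hZ1
  have hZ2 : ∑ k ∈ Finset.Icc 1 (j+1),
      (-1:ℤ)^k * ((j+2).choose (j+1-k)) * (k:ℤ)^2 = 1 := by
    rw [S_reindex j 2, P2 j hj, mul_neg, ← pow_add, Odd.neg_one_pow ⟨j, by omega⟩]
    ring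
  have e1 : ∑ k ∈ Finset.Icc 1 (j+1),
      (((-1:ℤ)^k * ((j+2).choose (j+1-k) : ℤ) : ℤ) : ℚ) * (k:ℚ) = -1 := by
    exact_mod_cast hZ1
  have e2 : ∑ k ∈ Finset.Icc 1 (j+1),
      (((-1:ℤ)^k * ((j+2).choose (j+1-k) : ℤ) : ℤ) : ℚ) * (k:ℚ)^2 = 1 := by
    exact_mod_cast hZ2
  rw [e1, e2]
  norm_num
end
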